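/- Assume V⁺ admits a monomial parametrization with exponent matrix A (data p, A, K, ψ). Let c ∈ im₊(Z). If there is no pair (a, ξ) with a ∈ ℝ_{>0}^n, ξ ∈ ℝ_{>0}^{n−p}, ξ ≠ 𝟙 and Z(a⋆ξ^A) = c, then there exist no k ∈ K and no α > 0 such that the equation Z(ψ(k)⋆ξ^A) = αc has at least two distinct solutions ξ₁ ≠ ξ₂ ∈ ℝ_{>0}^{n−p}. -/

import Mathlib

open Matrix

noncomputable section

/-- The monomial map φ: `phi Y x j = ∏ i, x i ^ Y i j`. -/
def phi {n r : ℕ} (Y : Matrix (Fin n) (Fin r) ℕ) (x : Fin n → ℝ) : Fin r → ℝ :=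
  fun j => ∏ i, x i ^ Y i j

/-- The positive steady state variety V⁺. -/
def Vplus {n r : ℕ} (Y : Matrix (Fin n) (Fin r) ℕ) (S : Matrix (Fin n) (Fin r) ℝ) :
    Set ((Fin r → ℝ) × (Fin n → ℝ)) :=
  {p | (∀ j, 0 < p.1 j) ∧ (∀ i, 0 < p.2 i) ∧
    S.mulVec (fun j => p.1 j * phi Y p.2 j) = 0}

/-- `E` is a cone generator matrix for `S`:
`E` is nonnegative and `ker S ∩ ℝ_{≥0}^r = {Eλ : λ ≥ 0}`. -/
def IsConeGenMatrix {n r d : ℕ} (S : Matrix (Fin n) (Fin r) ℝ)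
    (E : Matrix (Fin r) (Fin d) ℝ) : Prop :=
  (∀ j l, 0 ≤ E j l) ∧
  {v : Fin r → ℝ | S.mulVec v = 0 ∧ ∀ j, 0 ≤ v j} =
    {v : Fin r → ℝ | ∃ lam : Fin d → ℝ, (∀ l, 0 ≤ lam l) ∧ v = E.mulVec lam}

/-- The coefficient cone Λ(E). -/
def Lambda {r d : ℕ} (E : Matrix (Fin r) (Fin d) ℝ) : Set (Fin d → ℝ) :=
  {lam | (∀ l, 0 ≤ lam l) ∧ ∀ j, 0 < E.mulVec lam j}

/-- `ξ^B`: for a rational `q × m` matrix `B`, `(ξ^B) j = ∏ i, ξ i ^ (B i j)` (real powers). -/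
def vecPow {q m : ℕ} (ξ : Fin q → ℝ) (B : Matrix (Fin q) (Fin m) ℚ) : Fin m → ℝ :=
  fun j => ∏ i, ξ i ^ ((B i j : ℝ))

/-- V⁺ admits a monomial parametrization with exponent matrix `A` (data `p`, `A`, `K`, `ψ`). -/
def IsMonomialParamExp {n r : ℕ} (Y : Matrix (Fin n) (Fin r) ℕ)
    (S : Matrix (Fin n) (Fin r) ℝ) (p : ℕ) (A : Matrix (Fin (n - p)) (Fin n) ℚ)
    (K : Set (Fin r → ℝ)) (ψ : (Fin r → ℝ) → (Fin n → ℝ)) : Prop :=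
  p < n ∧ A.rank = n - p ∧ (∀ k ∈ K, ∀ j, 0 < k j) ∧ (∀ k ∈ K, ∀ i, 0 < ψ k i) ∧
  ∀ k x, (∀ j : Fin r, 0 < k j) → (∀ i : Fin n, 0 < x i) →
    ((k, x) ∈ Vplus Y S ↔ k ∈ K ∧
      ∃ ξ : Fin (n - p) → ℝ, (∀ l, 0 < ξ l) ∧ x = fun i => ψ k i * vecPow ξ A i)

/-- `Z` is a conservation matrix for `S` (with `s = rank S`):
its rows form a basis of the left kernel of `S`. -/
def IsConservationMatrix {n r : ℕ} (S : Matrix (Fin n) (Fin r) ℝ) (s : ℕ)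
    (Z : Matrix (Fin (n - s)) (Fin n) ℝ) : Prop :=
  S.rank = s ∧ s < n ∧ LinearIndependent ℝ (fun i => Z i) ∧
    Submodule.span ℝ (Set.range (fun i => Z i)) = LinearMap.ker S.vecMulLinear

/-- `im₊(Z) = {Zx : x ≥ 0}`. -/
def imPos {m n : ℕ} (Z : Matrix (Fin m) (Fin n) ℝ) : Set (Fin m → ℝ) :=
  {c | ∃ x : Fin n → ℝ, (∀ i, 0 ≤ x i) ∧ c = Z.mulVec x}

/-- The real row space of a rational matrix. -/
def rowSpace {q m : ℕ} (A : Matrix (Fin q) (Fin m) ℚ) : Submodule ℝ (Fin m → ℝ) :=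
  Submodule.span ℝ (Set.range (fun l => fun i => ((A l i : ℝ))))

/-- The column space (image) of `S`. -/
def colSpace {n r : ℕ} (S : Matrix (Fin n) (Fin r) ℝ) : Submodule ℝ (Fin n → ℝ) :=
  LinearMap.range S.mulVecLin

/-- Componentwise sign of a vector. -/
def signVec {m : ℕ} (v : Fin m → ℝ) : Fin m → ℝ := fun i => Real.sign (v i)

/-- exclusion of multistationarity on an entire ray in the space of total
concentrations. -/
theorem no_multistationarity_on_ray {n r s p : ℕ} (hn : 1 ≤ n) (hr : 1 ≤ r)
    (Y : Matrix (Fin n) (Fin r) ℕ) (S : Matrix (Fin n) (Fin r) ℝ)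
    (A : Matrix (Fin (n - p)) (Fin n) ℚ) (K : Set (Fin r → ℝ))
    (ψ : (Fin r → ℝ) → (Fin n → ℝ)) (hparam : IsMonomialParamExp Y S p A K ψ)
    (Z : Matrix (Fin (n - s)) (Fin n) ℝ) (hZ : IsConservationMatrix S s Z)
    (c : Fin (n - s) → ℝ) (hc : c ∈ imPos Z)
    (h : ¬ ∃ a : Fin n → ℝ, (∀ i, 0 < a i) ∧ ∃ ξ : Fin (n - p) → ℝ, (∀ l, 0 < ξ l) ∧
      ξ ≠ (fun _ => 1) ∧ Z.mulVec (fun i => a i * vecPow ξ A i) = c) :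
    ¬ ∃ k ∈ K, ∃ α : ℝ, 0 < α ∧
      ∃ ξ₁ ξ₂ : Fin (n - p) → ℝ, (∀ l, 0 < ξ₁ l) ∧ (∀ l, 0 < ξ₂ l) ∧ ξ₁ ≠ ξ₂ ∧
        Z.mulVec (fun i => ψ k i * vecPow ξ₁ A i) = α • c ∧
        Z.mulVec (fun i => ψ k i * vecPow ξ₂ A i) = α • c := by
  rintro ⟨k, hk, α, hα, ξ₁, ξ₂, hξ1, hξ2, hne, h1, h2⟩
  apply h
  have hψ : ∀ i, 0 < ψ k i := hparam.2.2.2.1 k hk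
  have hvp1 : ∀ i, 0 < vecPow ξ₁ A i := fun i =>
    Finset.prod_pos (fun l _ => Real.rpow_pos_of_pos (hξ1 l) _)
  refine ⟨fun i => α⁻¹ * (ψ k i * vecPow ξ₁ A i), fun i =>
    mul_pos (inv_pos.2 hα) (mul_pos (hψ i) (hvp1 i)),
    fun l => ξ₂ l * (ξ₁ l)⁻¹, fun l => mul_pos (hξ2 l) (inv_pos.2 (hξ1 l)), ?_, ?_⟩
  · intro hone
    apply hne
    funext l
    have := congrFun hone l
    exact ((mul_inv_eq_one₀ (hξ1 l).ne').mp this).symm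
  · have key : (fun i => α⁻¹ * (ψ k i * vecPow ξ₁ A i) *
        vecPow (fun l => ξ₂ l * (ξ₁ l)⁻¹) A i)
        = α⁻¹ • (fun i => ψ k i * vecPow ξ₂ A i) := by
      funext i
      have hvp : vecPow (fun l => ξ₂ l * (ξ₁ l)⁻¹) A i
          = vecPow ξ₂ A i * (vecPow ξ₁ A i)⁻¹ := by
        simp only [vecPow]
        rw [← Finset.prod_inv_distrib, ← Finset.prod_mul_distrib]
        refine Finset.prod_congr rfl fun l _ => ?_
        rw [Real.mul_rpow (hξ2 l).le (inv_nonneg.2 (hξ1 l).le),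
          Real.inv_rpow (hξ1 l).le]
      rw [hvp]
      have := (hvp1 i).ne'
      simp only [Pi.smul_apply, smul_eq_mul]
      field_simp
    rw [key, Matrix.mulVec_smul, h2, smul_smul, inv_mul_cancel₀ hα.ne', one_smul]
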